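/- Let I be the exact lazy Gumbel sampler and I' the sampler using a c-approximate top-k set S on scores X = {x_1,...,x_n}. Then for every index i in [n], exp(-c) * exp(x_i)/sum_j exp(x_j) <= Pr[I'(X,S) = i] <= exp(c) * exp(x_i)/sum_j exp(x_j). -/

import Mathlib

open MeasureTheory ProbabilityTheory Real Finset

namespace LazyGumbel

open Set Filter


noncomputable def gpdf (K s : ℝ) : ℝ := Real.exp (-s) * Real.exp (-K * Real.exp (-s))

noncomputable def ganti (K s : ℝ) : ℝ := Real.exp (-K * Real.exp (-s)) / K

lemma gpdf_nonneg (K s : ℝ) : 0 ≤ gpdf K s :=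
  mul_nonneg (Real.exp_nonneg _) (Real.exp_nonneg _)

lemma hasDerivAt_ganti {K : ℝ} (hK : 0 < K) (s : ℝ) :
    HasDerivAt (ganti K) (gpdf K s) s := by
  have h1 : HasDerivAt (fun u : ℝ => -K * Real.exp (-u)) (K * Real.exp (-s)) s := by
    have := (((hasDerivAt_id s).neg).exp).const_mul (-K)
    simp only [Pi.neg_apply, id] at this
    refine this.congr_deriv ?_
    ring
  have h2 := h1.exp
  have h3 := h2.div_const K
  refine h3.congr_deriv ?_
  unfold gpdf
  field_simp

lemma tendsto_ganti_atBot {K : ℝ} (hK : 0 < K) :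
    Tendsto (ganti K) atBot (nhds 0) := by
  have h1 : Tendsto (fun s : ℝ => -K * Real.exp (-s)) atBot atBot := by
    have : Tendsto (fun s : ℝ => Real.exp (-s)) atBot atTop :=
      Real.tendsto_exp_atTop.comp tendsto_neg_atBot_atTop
    exact this.const_mul_atTop_of_neg (neg_neg_iff_pos.mpr hK)
  have := Real.tendsto_exp_atBot.comp h1
  have h2 : Tendsto (fun s => Real.exp (-K * Real.exp (-s)) / K) atBot (nhds (0 / K)) := by
    have h3 := this.div_const K
    simpa [Function.comp] using h3
  unfold ganti
  simpa [neg_mul] using h2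

lemma tendsto_ganti_atTop {K : ℝ} (hK : 0 < K) :
    Tendsto (ganti K) atTop (nhds (1 / K)) := by
  have h1 : Tendsto (fun s : ℝ => -K * Real.exp (-s)) atTop (nhds 0) := by
    have : Tendsto (fun s : ℝ => Real.exp (-s)) atTop (nhds 0) :=
      Real.tendsto_exp_atBot.comp tendsto_neg_atTop_atBot
    simpa using this.const_mul (-K)
  have h2 := (Real.continuous_exp.tendsto 0).comp h1
  simp only [Function.comp, Real.exp_zero] at h2
  exact h2.div_const K

lemma integrableOn_gpdf_Iic {K : ℝ} (hK : 0 < K) (t : ℝ) :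
    IntegrableOn (gpdf K) (Iic t) := by
  -- via reflection to Ioi
  have hmp : MeasurePreserving (fun s : ℝ => -s)
      (volume.restrict (Ici (-t))) (volume.restrict (Iic t)) := by
    constructor
    · exact measurable_neg
    · have : (Measure.map Neg.neg (volume : Measure ℝ)) = volume := Measure.map_neg_eq_self _
      rw [show (Ici (-t)) = (fun s : ℝ => -s) ⁻¹' (Iic t) by ext u; simp]
      rw [← Measure.restrict_map measurable_neg measurableSet_Iic]
      rw [show (Neg.neg : ℝ → ℝ) = fun s : ℝ => -s from rfl] at this
      rw [this]
  have hemb : MeasurableEmbedding (fun s : ℝ => -s) :=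
    (Homeomorph.neg ℝ).measurableEmbedding
  have hIoi : IntegrableOn (fun s => gpdf K (-s)) (Ioi (-t)) := by
    have hderiv : ∀ s ∈ Ici (-t), HasDerivAt (fun u => -(ganti K (-u))) (gpdf K (-s)) s := by
      intro s _
      have := ((hasDerivAt_ganti hK (-s)).comp s ((hasDerivAt_id s).neg)).neg
      refine this.congr_deriv ?_
      simp
    have hpos : ∀ s ∈ Ioi (-t), 0 ≤ gpdf K (-s) := fun s _ => gpdf_nonneg _ _
    have htend : Tendsto (fun u => -(ganti K (-u))) atTop (nhds (-0)) :=
      ((tendsto_ganti_atBot hK).comp tendsto_neg_atTop_atBot).neg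
    exact integrableOn_Ioi_deriv_of_nonneg' hderiv hpos htend
  have hIci : IntegrableOn (fun s => gpdf K (-s)) (Ici (-t)) :=
    (integrableOn_Ici_iff_integrableOn_Ioi).mpr hIoi
  exact (hmp.integrable_comp_emb hemb (g := gpdf K)).mp hIci

lemma integral_gpdf_Iic {K : ℝ} (hK : 0 < K) (t : ℝ) :
    ∫ s in Iic t, gpdf K s = ganti K t := by
  have := integral_Iic_of_hasDerivAt_of_tendsto' (a := t)
    (fun s _ => hasDerivAt_ganti hK s) (integrableOn_gpdf_Iic hK t) (tendsto_ganti_atBot hK)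
  simpa using this

lemma lintegral_gpdf_Iic {K : ℝ} (hK : 0 < K) (t : ℝ) :
    ∫⁻ s in Iic t, ENNReal.ofReal (gpdf K s) = ENNReal.ofReal (ganti K t) := by
  rw [← integral_gpdf_Iic hK t]
  rw [← ofReal_integral_eq_lintegral_ofReal (integrableOn_gpdf_Iic hK t)]
  exact Filter.Eventually.of_forall fun s => gpdf_nonneg K s

lemma measurable_gpdf (K : ℝ) : Measurable (gpdf K) := by
  unfold gpdf; fun_prop

lemma lintegral_gpdf {K : ℝ} (hK : 0 < K) :
    ∫⁻ s, ENNReal.ofReal (gpdf K s) = ENNReal.ofReal (1 / K) := by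
  set μ' := (volume : Measure ℝ).withDensity fun s => ENNReal.ofReal (gpdf K s) with hμ'
  have happ : ∀ t : ℝ, μ' (Iic t) = ENNReal.ofReal (ganti K t) := by
    intro t
    rw [hμ', withDensity_apply _ measurableSet_Iic, lintegral_gpdf_Iic hK]
  have hunion : (⋃ m : ℕ, Iic (m : ℝ)) = univ := by
    ext u
    simp only [Set.mem_iUnion, Set.mem_Iic, Set.mem_univ, iff_true]
    exact exists_nat_ge u
  have hmono : Monotone fun m : ℕ => Iic (m : ℝ) := fun a b hab =>
    Iic_subset_Iic.mpr (by exact_mod_cast hab)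
  have h1 : Tendsto (fun m : ℕ => μ' (Iic (m : ℝ))) atTop (nhds (μ' univ)) := by
    have := tendsto_measure_iUnion_atTop (μ := μ') hmono
    rwa [hunion] at this
  have h2 : Tendsto (fun m : ℕ => μ' (Iic (m : ℝ))) atTop (nhds (ENNReal.ofReal (1 / K))) := by
    simp_rw [happ]
    apply ENNReal.tendsto_ofReal
    exact (tendsto_ganti_atTop hK).comp tendsto_natCast_atTop_atTop
  have := tendsto_nhds_unique h1 h2
  rw [hμ', withDensity_apply _ MeasurableSet.univ, Measure.restrict_univ] at this
  exact this

/-- The standard Gumbel measure on ℝ. -/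
noncomputable def gumbel : Measure ℝ :=
  (volume : Measure ℝ).withDensity fun s => ENNReal.ofReal (gpdf 1 s)

lemma gumbel_Iic (t : ℝ) : gumbel (Iic t) = ENNReal.ofReal (Real.exp (-Real.exp (-t))) := by
  rw [gumbel, withDensity_apply _ measurableSet_Iic, lintegral_gpdf_Iic one_pos]
  simp [ganti]

lemma gumbel_singleton (t : ℝ) : gumbel {t} = 0 := by
  rw [gumbel, withDensity_apply _ (measurableSet_singleton t)]
  rw [setLIntegral_measure_zero _ _ (measure_singleton t)]

lemma gumbel_Iio (t : ℝ) : gumbel (Iio t) = ENNReal.ofReal (Real.exp (-Real.exp (-t))) := by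
  refine le_antisymm ?_ ?_
  · rw [← gumbel_Iic t]; exact measure_mono Iio_subset_Iic_self
  · rw [← gumbel_Iic t] at *
    calc gumbel (Iic t) ≤ gumbel (Iio t ∪ {t}) := by
          apply measure_mono; intro u hu
          rcases lt_or_eq_of_le (Set.mem_Iic.mp hu) with h | h
          · exact Or.inl h
          · exact Or.inr (by simp [h])
      _ ≤ gumbel (Iio t) + gumbel {t} := measure_union_le _ _
      _ = gumbel (Iio t) := by rw [gumbel_singleton, add_zero]

instance : IsProbabilityMeasure gumbel := by
  constructor
  rw [gumbel, withDensity_apply _ MeasurableSet.univ, Measure.restrict_univ,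
    lintegral_gpdf one_pos]
  simp


variable {Ω : Type*} [MeasurableSpace Ω] (μ : Measure Ω) [IsProbabilityMeasure μ]
  {n : ℕ} (G : Fin n → Ω → ℝ) (hmeas : ∀ i, Measurable (G i))
  (hindep : iIndepFun G μ)
  (hcdf : ∀ i t, μ {ω | G i ω ≤ t} = ENNReal.ofReal (Real.exp (-Real.exp (-t))))

include hmeas hcdf in
lemma map_G_eq (i : Fin n) : Measure.map (G i) μ = gumbel := by
  haveI : IsProbabilityMeasure (Measure.map (G i) μ) :=
    Measure.isProbabilityMeasure_map (hmeas i).aemeasurable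
  apply Measure.ext_of_Iic
  intro t
  rw [Measure.map_apply (hmeas i) measurableSet_Iic, gumbel_Iic]
  exact hcdf i t

include hmeas hindep hcdf in
lemma map_pi_eq :
    Measure.map (fun ω (j : Fin n) => G j ω) μ = Measure.pi (fun _ : Fin n => gumbel) := by
  refine (Measure.pi_eq fun s hs => ?_).symm
  rw [Measure.map_apply (measurable_pi_lambda _ hmeas) (MeasurableSet.univ_pi hs)]
  have hset : (fun ω (j : Fin n) => G j ω) ⁻¹' (Set.pi univ s) =
      ⋂ j ∈ Finset.univ, G j ⁻¹' s j := by
    ext ω; simp [Set.mem_univ_pi]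
  rw [hset, hindep.measure_inter_preimage_eq_mul Finset.univ (fun j _ => hs j)]
  refine Finset.prod_congr rfl fun j _ => ?_
  rw [← Measure.map_apply (hmeas j) (hs j), map_G_eq μ G hmeas hcdf j]

include hmeas hindep hcdf in
lemma measure_event_le (d : Fin n → ℝ) (i : Fin n) :
    μ {ω | ∀ j, j ≠ i → G j ω + d j ≤ G i ω + d i}
      = ENNReal.ofReal (Real.exp (d i) / ∑ j, Real.exp (d j)) := by
  classical
  set p : Fin n → Prop := fun j => j = i with hp
  haveI hu : Unique {j // p j} := ⟨⟨⟨i, rfl⟩⟩, fun j => Subtype.ext j.2⟩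
  set A : Set (Fin n → ℝ) := {y | ∀ j, j ≠ i → y j + d j ≤ y i + d i} with hA
  have hAm : MeasurableSet A := by
    have : A = ⋂ j, {y : Fin n → ℝ | j ≠ i → y j + d j ≤ y i + d i} := by
      ext y; simp [hA]
    rw [this]
    refine MeasurableSet.iInter fun j => ?_
    by_cases h : j = i
    · simp [h]
    · have : {y : Fin n → ℝ | j ≠ i → y j + d j ≤ y i + d i}
          = {y : Fin n → ℝ | y j + d j ≤ y i + d i} := by
        ext y; simp [h]
      rw [this]
      exact measurableSet_le ((measurable_pi_apply j).add_const _)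
        ((measurable_pi_apply i).add_const _)
  have h1 : μ {ω | ∀ j, j ≠ i → G j ω + d j ≤ G i ω + d i}
      = Measure.pi (fun _ : Fin n => gumbel) A := by
    rw [← map_pi_eq μ G hmeas hindep hcdf,
      Measure.map_apply (measurable_pi_lambda _ hmeas) hAm]
    rfl
  set B2 : Set (({j // p j} → ℝ) × ({j // ¬ p j} → ℝ)) :=
    {z | ∀ j : {j // ¬ p j}, z.2 j + d j ≤ z.1 ⟨i, rfl⟩ + d i} with hB2
  have hB2m : MeasurableSet B2 := by
    have : B2 = ⋂ j : {j // ¬ p j},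
        {z : ({j // p j} → ℝ) × ({j // ¬ p j} → ℝ) | z.2 j + d j ≤ z.1 ⟨i, rfl⟩ + d i} := by
      ext z; simp [hB2]
    rw [this]
    exact MeasurableSet.iInter fun j => measurableSet_le
      (((measurable_pi_apply j).comp measurable_snd).add_const _)
      (((measurable_pi_apply (⟨i, rfl⟩ : {j // p j})).comp measurable_fst).add_const _)
  have hpre : A = (MeasurableEquiv.piEquivPiSubtypeProd (fun _ : Fin n => ℝ) p) ⁻¹' B2 := by
    ext y
    simp only [hA, hB2, Set.mem_preimage, Set.mem_setOf_eq,
      MeasurableEquiv.piEquivPiSubtypeProd, MeasurableEquiv.coe_mk,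
      Equiv.piEquivPiSubtypeProd_apply]
    constructor
    · intro h j; exact h j.1 j.2
    · intro h j hj; exact h ⟨j, hj⟩
  have mp := measurePreserving_piEquivPiSubtypeProd (fun _ : Fin n => gumbel) p
  have h2 : Measure.pi (fun _ : Fin n => gumbel) A =
      ((Measure.pi fun _ : {j // p j} => gumbel).prod
        (Measure.pi fun _ : {j // ¬ p j} => gumbel)) B2 := by
    rw [hpre, mp.measure_preimage hB2m.nullMeasurableSet]
    congr!
  set Sc : ℝ := ∑ j : {j // ¬ p j}, Real.exp (d j - d i) with hSc
  set K : ℝ := 1 + Sc with hK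
  have hScnn : 0 ≤ Sc := Finset.sum_nonneg fun j _ => (Real.exp_pos _).le
  have hKpos : 0 < K := by positivity
  have hfun : ∀ t : ℝ, (∏ j : {j // ¬ p j}, gumbel (Iic (t + d i - d j)))
      = ENNReal.ofReal (Real.exp (-(Real.exp (-t)) * Sc)) := by
    intro t
    simp_rw [gumbel_Iic]
    rw [← ENNReal.ofReal_prod_of_nonneg (fun j _ => (Real.exp_pos _).le), ← Real.exp_sum]
    congr 2
    rw [hSc, Finset.mul_sum]
    refine Finset.sum_congr rfl fun j _ => ?_
    rw [neg_mul, ← Real.exp_add]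
    congr 1
    ring
  have h3 := Measure.prod_apply (μ := Measure.pi fun _ : {j // p j} => gumbel)
    (ν := Measure.pi fun _ : {j // ¬ p j} => gumbel) hB2m
  have hsec : ∀ u : {j // p j} → ℝ, Prod.mk u ⁻¹' B2
      = Set.pi univ fun j : {j // ¬ p j} => Iic (u ⟨i, rfl⟩ + d i - d j) := by
    intro u
    ext v
    simp only [hB2, Set.mem_preimage, Set.mem_setOf_eq, Set.mem_univ_pi, Set.mem_Iic]
    constructor <;> intro h j <;> have := h j <;> linarith
  set g : ℝ → ENNReal := fun t => ENNReal.ofReal (Real.exp (-(Real.exp (-t)) * Sc)) with hg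
  have hgm : Measurable g := by
    apply ENNReal.measurable_ofReal.comp
    fun_prop
  have h4 : ((Measure.pi fun _ : {j // p j} => gumbel).prod
      (Measure.pi fun _ : {j // ¬ p j} => gumbel)) B2 = ∫⁻ u : {j // p j} → ℝ,
        g (u ⟨i, rfl⟩) ∂(Measure.pi fun _ : {j // p j} => gumbel) := by
    rw [h3]
    refine lintegral_congr fun u => ?_
    rw [hsec u, Measure.pi_pi, hfun (u ⟨i, rfl⟩)]
  have h5 : ∫⁻ u : {j // p j} → ℝ, g (u ⟨i, rfl⟩)
        ∂(Measure.pi fun _ : {j // p j} => gumbel) = ∫⁻ t, g t ∂gumbel := by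
    have hmp2 := measurePreserving_piUnique (fun _ : {j // p j} => gumbel)
    have heq := hmp2.lintegral_comp hgm
    simp only [MeasurableEquiv.piUnique_apply] at heq
    have hd : (default : {j // p j}) = ⟨i, rfl⟩ := Subtype.ext (default : {j // p j}).2
    rw [hd] at heq
    exact heq
  have h6 : ∫⁻ t, g t ∂gumbel = ENNReal.ofReal (1 / K) := by
    rw [gumbel, lintegral_withDensity_eq_lintegral_mul _
      ((measurable_gpdf 1).ennreal_ofReal) hgm]
    have hpt : ∀ t : ℝ, (((fun s => ENNReal.ofReal (gpdf 1 s)) * g) t)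
        = ENNReal.ofReal (gpdf K t) := by
      intro t
      simp only [Pi.mul_apply, hg]
      rw [← ENNReal.ofReal_mul (gpdf_nonneg 1 t)]
      congr 1
      unfold gpdf
      rw [mul_assoc, ← Real.exp_add, hK]
      congr 1
      ring
    rw [lintegral_congr hpt, lintegral_gpdf hKpos]
  have hKsum : Real.exp (d i) * K = ∑ j, Real.exp (d j) := by
    rw [hK, mul_add, mul_one, hSc, Finset.mul_sum]
    have hterm : ∀ j : {j // ¬ p j}, Real.exp (d i) * Real.exp (d j.1 - d i)
        = Real.exp (d j.1) := by
      intro j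
      rw [← Real.exp_add]
      congr 1
      ring
    rw [Finset.sum_congr rfl fun j _ => hterm j]
    have hsub : ∑ j ∈ Finset.univ.erase i, Real.exp (d j)
        = ∑ j : {j // ¬ p j}, Real.exp (d j.1) :=
      Finset.sum_subtype (Finset.univ.erase i) (fun x => by simp [hp]) fun j => Real.exp (d j)
    rw [← hsub]
    exact Finset.add_sum_erase _ (fun j => Real.exp (d j)) (Finset.mem_univ i)
  have hfin : (1 : ℝ) / K = Real.exp (d i) / ∑ j, Real.exp (d j) := by
    rw [← hKsum, div_mul_cancel_left₀ (Real.exp_ne_zero (d i)) K, one_div]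
  rw [h1, h2, h4, h5, h6, hfin]

include hmeas hindep hcdf in
lemma measure_event_lt (d : Fin n → ℝ) (i : Fin n) :
    μ {ω | ∀ j, j ≠ i → G j ω + d j < G i ω + d i}
      = ENNReal.ofReal (Real.exp (d i) / ∑ j, Real.exp (d j)) := by
  classical
  set p : Fin n → Prop := fun j => j = i with hp
  haveI hu : Unique {j // p j} := ⟨⟨⟨i, rfl⟩⟩, fun j => Subtype.ext j.2⟩
  set A : Set (Fin n → ℝ) := {y | ∀ j, j ≠ i → y j + d j < y i + d i} with hA
  have hAm : MeasurableSet A := by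
    have : A = ⋂ j, {y : Fin n → ℝ | j ≠ i → y j + d j < y i + d i} := by
      ext y; simp [hA]
    rw [this]
    refine MeasurableSet.iInter fun j => ?_
    by_cases h : j = i
    · simp [h]
    · have : {y : Fin n → ℝ | j ≠ i → y j + d j < y i + d i}
          = {y : Fin n → ℝ | y j + d j < y i + d i} := by
        ext y; simp [h]
      rw [this]
      exact measurableSet_lt ((measurable_pi_apply j).add_const _)
        ((measurable_pi_apply i).add_const _)
  have h1 : μ {ω | ∀ j, j ≠ i → G j ω + d j < G i ω + d i}
      = Measure.pi (fun _ : Fin n => gumbel) A := by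
    rw [← map_pi_eq μ G hmeas hindep hcdf,
      Measure.map_apply (measurable_pi_lambda _ hmeas) hAm]
    rfl
  set B2 : Set (({j // p j} → ℝ) × ({j // ¬ p j} → ℝ)) :=
    {z | ∀ j : {j // ¬ p j}, z.2 j + d j < z.1 ⟨i, rfl⟩ + d i} with hB2
  have hB2m : MeasurableSet B2 := by
    have : B2 = ⋂ j : {j // ¬ p j},
        {z : ({j // p j} → ℝ) × ({j // ¬ p j} → ℝ) | z.2 j + d j < z.1 ⟨i, rfl⟩ + d i} := by
      ext z; simp [hB2]
    rw [this]
    exact MeasurableSet.iInter fun j => measurableSet_lt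
      (((measurable_pi_apply j).comp measurable_snd).add_const _)
      (((measurable_pi_apply (⟨i, rfl⟩ : {j // p j})).comp measurable_fst).add_const _)
  have hpre : A = (MeasurableEquiv.piEquivPiSubtypeProd (fun _ : Fin n => ℝ) p) ⁻¹' B2 := by
    ext y
    simp only [hA, hB2, Set.mem_preimage, Set.mem_setOf_eq,
      MeasurableEquiv.piEquivPiSubtypeProd, MeasurableEquiv.coe_mk,
      Equiv.piEquivPiSubtypeProd_apply]
    constructor
    · intro h j; exact h j.1 j.2
    · intro h j hj; exact h ⟨j, hj⟩
  have mp := measurePreserving_piEquivPiSubtypeProd (fun _ : Fin n => gumbel) p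
  have h2 : Measure.pi (fun _ : Fin n => gumbel) A =
      ((Measure.pi fun _ : {j // p j} => gumbel).prod
        (Measure.pi fun _ : {j // ¬ p j} => gumbel)) B2 := by
    rw [hpre, mp.measure_preimage hB2m.nullMeasurableSet]
    congr!
  set Sc : ℝ := ∑ j : {j // ¬ p j}, Real.exp (d j - d i) with hSc
  set K : ℝ := 1 + Sc with hK
  have hScnn : 0 ≤ Sc := Finset.sum_nonneg fun j _ => (Real.exp_pos _).le
  have hKpos : 0 < K := by positivity
  have hfun : ∀ t : ℝ, (∏ j : {j // ¬ p j}, gumbel (Iio (t + d i - d j)))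
      = ENNReal.ofReal (Real.exp (-(Real.exp (-t)) * Sc)) := by
    intro t
    simp_rw [gumbel_Iio]
    rw [← ENNReal.ofReal_prod_of_nonneg (fun j _ => (Real.exp_pos _).le), ← Real.exp_sum]
    congr 2
    rw [hSc, Finset.mul_sum]
    refine Finset.sum_congr rfl fun j _ => ?_
    rw [neg_mul, ← Real.exp_add]
    congr 1
    ring
  have h3 := Measure.prod_apply (μ := Measure.pi fun _ : {j // p j} => gumbel)
    (ν := Measure.pi fun _ : {j // ¬ p j} => gumbel) hB2m
  have hsec : ∀ u : {j // p j} → ℝ, Prod.mk u ⁻¹' B2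
      = Set.pi univ fun j : {j // ¬ p j} => Iio (u ⟨i, rfl⟩ + d i - d j) := by
    intro u
    ext v
    simp only [hB2, Set.mem_preimage, Set.mem_setOf_eq, Set.mem_univ_pi, Set.mem_Iio]
    constructor <;> intro h j <;> have := h j <;> linarith
  set g : ℝ → ENNReal := fun t => ENNReal.ofReal (Real.exp (-(Real.exp (-t)) * Sc)) with hg
  have hgm : Measurable g := by
    apply ENNReal.measurable_ofReal.comp
    fun_prop
  have h4 : ((Measure.pi fun _ : {j // p j} => gumbel).prod
      (Measure.pi fun _ : {j // ¬ p j} => gumbel)) B2 = ∫⁻ u : {j // p j} → ℝ,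
        g (u ⟨i, rfl⟩) ∂(Measure.pi fun _ : {j // p j} => gumbel) := by
    rw [h3]
    refine lintegral_congr fun u => ?_
    rw [hsec u, Measure.pi_pi, hfun (u ⟨i, rfl⟩)]
  have h5 : ∫⁻ u : {j // p j} → ℝ, g (u ⟨i, rfl⟩)
        ∂(Measure.pi fun _ : {j // p j} => gumbel) = ∫⁻ t, g t ∂gumbel := by
    have hmp2 := measurePreserving_piUnique (fun _ : {j // p j} => gumbel)
    have heq := hmp2.lintegral_comp hgm
    simp only [MeasurableEquiv.piUnique_apply] at heq
    have hd : (default : {j // p j}) = ⟨i, rfl⟩ := Subtype.ext (default : {j // p j}).2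
    rw [hd] at heq
    exact heq
  have h6 : ∫⁻ t, g t ∂gumbel = ENNReal.ofReal (1 / K) := by
    rw [gumbel, lintegral_withDensity_eq_lintegral_mul _
      ((measurable_gpdf 1).ennreal_ofReal) hgm]
    have hpt : ∀ t : ℝ, (((fun s => ENNReal.ofReal (gpdf 1 s)) * g) t)
        = ENNReal.ofReal (gpdf K t) := by
      intro t
      simp only [Pi.mul_apply, hg]
      rw [← ENNReal.ofReal_mul (gpdf_nonneg 1 t)]
      congr 1
      unfold gpdf
      rw [mul_assoc, ← Real.exp_add, hK]
      congr 1
      ring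
    rw [lintegral_congr hpt, lintegral_gpdf hKpos]
  have hKsum : Real.exp (d i) * K = ∑ j, Real.exp (d j) := by
    rw [hK, mul_add, mul_one, hSc, Finset.mul_sum]
    have hterm : ∀ j : {j // ¬ p j}, Real.exp (d i) * Real.exp (d j.1 - d i)
        = Real.exp (d j.1) := by
      intro j
      rw [← Real.exp_add]
      congr 1
      ring
    rw [Finset.sum_congr rfl fun j _ => hterm j]
    have hsub : ∑ j ∈ Finset.univ.erase i, Real.exp (d j)
        = ∑ j : {j // ¬ p j}, Real.exp (d j.1) :=
      Finset.sum_subtype (Finset.univ.erase i) (fun x => by simp [hp]) fun j => Real.exp (d j)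
    rw [← hsub]
    exact Finset.add_sum_erase _ (fun j => Real.exp (d j)) (Finset.mem_univ i)
  have hfin : (1 : ℝ) / K = Real.exp (d i) / ∑ j, Real.exp (d j) := by
    rw [← hKsum, div_mul_cancel_left₀ (Real.exp_ne_zero (d i)) K, one_div]
  rw [h1, h2, h4, h5, h6, hfin]

end LazyGumbel

open LazyGumbel in
/-- Two-sided bound for lazy Gumbel sampling with a `c`-approximate top-`k` set `S`:
for every index `i`, the probability that the approximate sampler `I'` outputs `i`
lies within a multiplicative factor `e^{±c}` of the exact softmax probability
`exp (x i) / ∑ j, exp (x j)`. -/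
theorem lazy_gumbel_approx_two_sided {Ω : Type*} [MeasurableSpace Ω]
    (μ : Measure Ω) [IsProbabilityMeasure μ] {n : ℕ} (x : Fin n → ℝ)
    (G : Fin n → Ω → ℝ) (hmeas : ∀ i, Measurable (G i))
    (hindep : iIndepFun G μ)
    (hcdf : ∀ i t, μ {ω | G i ω ≤ t} = ENNReal.ofReal (Real.exp (-Real.exp (-t))))
    (k : ℕ) (c : ℝ) (hc : 0 ≤ c) (S Sstar : Finset (Fin n)) (hS : S.Nonempty)
    (hScard : S.card = k) (hSstarcard : Sstar.card = k)
    (htop : ∀ i ∈ Sstar, ∀ j ∉ Sstar, x j ≤ x i)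
    (happrox : ∀ i ∉ S, ∀ j ∈ S, x i - x j ≤ c)
    (B : Ω → ℝ)
    (hB : ∀ ω, B ω = S.sup' hS (fun j => x j + G j ω) - S.inf' hS x)
    (eligible : Fin n → Ω → Prop)
    (helig : ∀ j ω, eligible j ω ↔ (j ∈ S ∨ B ω < G j ω))
    (i : Fin n) :
    ENNReal.ofReal (Real.exp (-c) * (Real.exp (x i) / ∑ j, Real.exp (x j))) ≤
        μ {ω | eligible i ω ∧
          ∀ j, eligible j ω → j ≠ i → x j + G j ω < x i + G i ω} ∧
      μ {ω | eligible i ω ∧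
          ∀ j, eligible j ω → j ≠ i → x j + G j ω < x i + G i ω} ≤
        ENNReal.ofReal (Real.exp c * (Real.exp (x i) / ∑ j, Real.exp (x j))) := by
  classical
  set s0 : ℝ := ∑ j, Real.exp (x j) with hs0def
  have hs0 : 0 < s0 := Finset.sum_pos (fun j _ => Real.exp_pos _) ⟨i, Finset.mem_univ i⟩
  set E : Set Ω := {ω | eligible i ω ∧
      ∀ j, eligible j ω → j ≠ i → x j + G j ω < x i + G i ω} with hE
  obtain ⟨j1, hj1S, hj1⟩ := Finset.exists_mem_eq_inf' hS x
  constructor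
  · -- lower bound
    set dL : Fin n → ℝ := fun j => if j = i then x i else x j + c with hdL
    have hdLi : dL i = x i := if_pos rfl
    have hsubL : {ω | ∀ j, j ≠ i → G j ω + dL j < G i ω + dL i} ⊆ E := by
      intro ω hω
      have hω' : ∀ j, j ≠ i → x j + G j ω + c < x i + G i ω := by
        intro j hji
        have := hω j hji
        rw [hdLi, hdL] at this
        simp only [if_neg hji] at this
        linarith
      constructor
      · rw [helig]
        by_cases hiS : i ∈ S
        · exact Or.inl hiS
        · right
          rw [hB]
          obtain ⟨j0, hj0S, hj0⟩ := Finset.exists_mem_eq_sup' hS (fun j => x j + G j ω)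
          have hj0i : j0 ≠ i := fun h => hiS (h ▸ hj0S)
          have h0 := hω' j0 hj0i
          have h1 := happrox i hiS j1 hj1S
          rw [hj0, hj1]
          linarith
      · intro j _ hji
        have := hω' j hji
        linarith
    have hEL := measure_event_lt μ G hmeas hindep hcdf dL i
    have hsum : ∑ j, Real.exp (dL j) ≤ Real.exp c * s0 := by
      rw [hs0def, Finset.mul_sum]
      refine Finset.sum_le_sum fun j _ => ?_
      rw [hdL]
      by_cases hji : j = i
      · subst hji
        simp only [if_pos rfl]
        calc Real.exp (x j) = 1 * Real.exp (x j) := (one_mul _).symm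
          _ ≤ Real.exp c * Real.exp (x j) := by
              have : (1:ℝ) ≤ Real.exp c := Real.one_le_exp hc
              nlinarith [Real.exp_pos (x j)]
      · simp only [if_neg hji]
        rw [Real.exp_add]
        ring_nf
        exact le_refl _
    have hsumpos : 0 < ∑ j, Real.exp (dL j) :=
      Finset.sum_pos (fun j _ => Real.exp_pos _) ⟨i, Finset.mem_univ i⟩
    have hineq : Real.exp (-c) * (Real.exp (x i) / s0) ≤ Real.exp (dL i) / ∑ j, Real.exp (dL j) := by
      rw [hdLi]
      have heq : Real.exp (-c) * (Real.exp (x i) / s0)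
          = Real.exp (x i) / (Real.exp c * s0) := by
        rw [Real.exp_neg]
        field_simp
      rw [heq]
      exact div_le_div_of_nonneg_left (Real.exp_nonneg _) hsumpos hsum
    calc ENNReal.ofReal (Real.exp (-c) * (Real.exp (x i) / s0))
        ≤ ENNReal.ofReal (Real.exp (dL i) / ∑ j, Real.exp (dL j)) :=
          ENNReal.ofReal_le_ofReal hineq
      _ = μ {ω | ∀ j, j ≠ i → G j ω + dL j < G i ω + dL i} := hEL.symm
      _ ≤ μ E := measure_mono hsubL
  · -- upper bound
    set dU : Fin n → ℝ := fun j => if j = i then x i + c else x j with hdU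
    have hdUi : dU i = x i + c := if_pos rfl
    have hsubU : E ⊆ {ω | ∀ j, j ≠ i → G j ω + dU j ≤ G i ω + dU i} := by
      rintro ω ⟨heli, hwin⟩ j hji
      rw [hdUi, hdU]
      simp only [if_neg hji]
      by_cases hjel : eligible j ω
      · have := hwin j hjel hji
        linarith
      · rw [helig] at hjel
        push_neg at hjel
        obtain ⟨hjS, hjB⟩ := hjel
        have hGjB : G j ω ≤ B ω := hjB
        have happ := happrox j hjS j1 hj1S
        have hsup : S.sup' hS (fun l => x l + G l ω) ≤ x i + G i ω := by
          apply Finset.sup'_le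
          intro l hlS
          have hlel : eligible l ω := (helig l ω).mpr (Or.inl hlS)
          by_cases hli : l = i
          · subst hli; exact le_refl _
          · exact (hwin l hlel hli).le
        rw [hB] at hGjB
        rw [hj1] at hGjB
        linarith
    have hEU := measure_event_le μ G hmeas hindep hcdf dU i
    have hsumU : ∑ j, Real.exp (dU j) = s0 + Real.exp (x i + c) - Real.exp (x i) := by
      have h1 : ∑ j, Real.exp (dU j)
          = Real.exp (dU i) + ∑ j ∈ Finset.univ.erase i, Real.exp (dU j) :=
        (Finset.add_sum_erase _ (fun j => Real.exp (dU j)) (Finset.mem_univ i)).symm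
      have h2 : s0 = Real.exp (x i) + ∑ j ∈ Finset.univ.erase i, Real.exp (x j) :=
        (Finset.add_sum_erase _ (fun j => Real.exp (x j)) (Finset.mem_univ i)).symm
      have h3 : ∑ j ∈ Finset.univ.erase i, Real.exp (dU j)
          = ∑ j ∈ Finset.univ.erase i, Real.exp (x j) := by
        refine Finset.sum_congr rfl fun j hj => ?_
        rw [hdU]
        simp only [if_neg (Finset.mem_erase.mp hj).1]
      rw [h1, h3, hdUi, h2]
      ring
    have hineqU : Real.exp (dU i) / ∑ j, Real.exp (dU j)
        ≤ Real.exp c * (Real.exp (x i) / s0) := by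
      rw [hdUi, hsumU, Real.exp_add]
      have hD : s0 ≤ s0 + Real.exp (x i) * Real.exp c - Real.exp (x i) := by
        have h1 : Real.exp (x i) ≤ Real.exp (x i) * Real.exp c := by
          nlinarith [Real.exp_pos (x i), Real.one_le_exp hc]
        linarith
      calc Real.exp (x i) * Real.exp c / (s0 + Real.exp (x i) * Real.exp c - Real.exp (x i))
          ≤ Real.exp (x i) * Real.exp c / s0 :=
            div_le_div_of_nonneg_left (by positivity) hs0 hD
        _ = Real.exp c * (Real.exp (x i) / s0) := by ring
    calc μ E ≤ μ {ω | ∀ j, j ≠ i → G j ω + dU j ≤ G i ω + dU i} := measure_mono hsubU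
      _ = ENNReal.ofReal (Real.exp (dU i) / ∑ j, Real.exp (dU j)) := hEU
      _ ≤ ENNReal.ofReal (Real.exp c * (Real.exp (x i) / s0)) :=
          ENNReal.ofReal_le_ofReal hineqU
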